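/- For every real number c1 with 0 ≤ c1 ≤ 1/2, one has (√(c1(c1+4)) − c1)/2 − c1 ≤ 3 − 2√2, with equality if and only if c1 = (3√2)/2 − 2. -/
import Mathlib


theorem stmt6 (c1 : ℝ) (h1 : 0 ≤ c1) (h2 : c1 ≤ 1 / 2) :
    (Real.sqrt (c1 * (c1 + 4)) - c1) / 2 - c1 ≤ 3 - 2 * Real.sqrt 2 ∧
    ((Real.sqrt (c1 * (c1 + 4)) - c1) / 2 - c1 = 3 - 2 * Real.sqrt 2 ↔
      c1 = 3 * Real.sqrt 2 / 2 - 2) := by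
  have hs : Real.sqrt 2 ^ 2 = 2 := Real.sq_sqrt (by norm_num)
  have hs0 : (0:ℝ) ≤ Real.sqrt 2 := Real.sqrt_nonneg 2
  have hs1 : (1:ℝ) ≤ Real.sqrt 2 := by nlinarith
  have hs2 : Real.sqrt 2 ≤ 3/2 := by nlinarith
  have ha : (0:ℝ) ≤ c1 * (c1 + 4) := by nlinarith
  have hbd : 0 ≤ 2 * (3 - 2 * Real.sqrt 2) + 3 * c1 := by nlinarith
  have key : Real.sqrt (c1 * (c1 + 4)) ≤ 2 * (3 - 2 * Real.sqrt 2) + 3 * c1 := by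
    have h := Real.sqrt_le_sqrt (show c1 * (c1 + 4) ≤ (2 * (3 - 2 * Real.sqrt 2) + 3 * c1)^2 by
      nlinarith [sq_nonneg (c1 - (3 * Real.sqrt 2 / 2 - 2))])
    rwa [Real.sqrt_sq hbd] at h
  refine ⟨by linarith, ?_, ?_⟩
  · intro h
    have heq : Real.sqrt (c1 * (c1 + 4)) = 2 * (3 - 2 * Real.sqrt 2) + 3 * c1 := by linarith
    have hsq : c1 * (c1 + 4) = (2 * (3 - 2 * Real.sqrt 2) + 3 * c1)^2 := by
      rw [← heq, Real.sq_sqrt ha]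
    have h0 : (c1 - (3 * Real.sqrt 2 / 2 - 2))^2 = 0 := by nlinarith
    have := sq_eq_zero_iff.mp h0
    linarith
  · intro h
    subst h
    have hval : (3 * Real.sqrt 2 / 2 - 2) * ((3 * Real.sqrt 2 / 2 - 2) + 4)
        = (Real.sqrt 2 / 2)^2 := by ring_nf; nlinarith
    rw [hval, Real.sqrt_sq (by positivity)]
    ring
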